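/- Let M be infinite, let ℱ be a right Følner net in the right amenable cell space 𝓡, let X be a strongly irreducible subshift of Q^M of finite type, let Y be a subshift of Q^M, and let Δ be a local map from X to Y that is not pre-injective. Then Ent_ℱ(Δ(X)) < Ent_ℱ(X). -/

import Mathlib

open Filter Set

namespace GoE

variable {G M Q : Type*}

/-- A left homogeneous space `⟨M, G, ▷⟩` together with a coordinate system
`⟨m₀, (g_{m₀,m})_{m∈M}⟩`: a cell space with finite stabiliser `G₀` of `m₀`. -/
structure CellSpace (G M : Type*) [Group G] where
  act : G → M → M
  one_act : ∀ m : M, act 1 m = m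
  mul_act : ∀ (g h : G) (m : M), act (g * h) m = act g (act h m)
  transitive : ∀ m m' : M, ∃ g : G, act g m = m'
  m0 : M
  coord : M → G
  coord_act : ∀ m : M, act (coord m) m0 = m
  stab_finite : {g : G | act g m0 = m0}.Finite

variable [Group G]

namespace CellSpace

/-- Membership in the stabiliser `G₀` of `m₀`. -/
def stab (R : CellSpace G M) (g : G) : Prop := R.act g R.m0 = R.m0

/-- The induced right semi-action `m ↝ gG₀ = g_{m₀,m} g ▷ m₀`, on representatives. -/
def sAct (R : CellSpace G M) (m : M) (g : G) : M := R.act (R.coord m * g) R.m0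

/-- `m ↝ ι n` where `ι : M → G/G₀`, `n ↦ G_{m₀,n}` is the canonical identification. -/
def nAct (R : CellSpace G M) (m n : M) : M := R.act (R.coord m * R.coord n) R.m0

/-- `S ⊆ G` represents a finite symmetric right generating set of cosets
(`G₀ · S ⊆ S`, `S⁻¹ ⊆ S`, and `S` generates). -/
structure IsRightGenSet (R : CellSpace G M) (S : Set G) : Prop where
  finite : S.Finite
  saturated : ∀ s ∈ S, ∀ g₀ : G, R.stab g₀ → s * g₀ ∈ S
  stab_mul : ∀ g₀ : G, R.stab g₀ → ∀ s ∈ S, g₀ * s ∈ S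
  symm : ∀ s ∈ S, s⁻¹ ∈ S
  generates : ∀ m : M, ∃ (k : ℕ) (f : ℕ → M), f 0 = R.m0 ∧ f k = m ∧
    ∀ i < k, ∃ s ∈ S, f (i + 1) = R.sAct (f i) s

/-- There is an `S`-path of length `n` from `m` to `m'` in the `S`-Cayley graph. -/
def Chain (R : CellSpace G M) (S : Set G) (m m' : M) (n : ℕ) : Prop :=
  ∃ f : ℕ → M, f 0 = m ∧ f n = m' ∧ ∀ i < n, ∃ s ∈ S, f (i + 1) = R.sAct (f i) s

/-- The `S`-metric `d`. -/
noncomputable def dist (R : CellSpace G M) (S : Set G) (m m' : M) : ℕ :=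
  sInf {n : ℕ | R.Chain S m m' n}

/-- The ball `B(m, ρ)` of radius `ρ` centred at `m`. -/
noncomputable def ball (R : CellSpace G M) (S : Set G) (m : M) (ρ : ℕ) : Set M :=
  {m' : M | R.dist S m m' ≤ ρ}

/-- The `θ`-interior `A^{-θ}` of `A`. -/
noncomputable def inter (R : CellSpace G M) (S : Set G) (A : Set M) (θ : ℕ) : Set M :=
  {m ∈ A | R.ball S m θ ⊆ A}

/-- The `θ`-closure `A^{+θ}` of `A`. -/
noncomputable def clos (R : CellSpace G M) (S : Set G) (A : Set M) (θ : ℕ) : Set M :=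
  {m : M | (R.ball S m θ ∩ A).Nonempty}

/-- The external `θ`-boundary `∂θ⁺A = A^{+θ} ∖ A`. -/
noncomputable def extB (R : CellSpace G M) (S : Set G) (A : Set M) (θ : ℕ) : Set M :=
  R.clos S A θ \ A

/-- The internal `θ`-boundary `∂θ⁻A = A ∖ A^{-θ}`. -/
noncomputable def intB (R : CellSpace G M) (S : Set G) (A : Set M) (θ : ℕ) : Set M :=
  A \ R.inter S A θ

/-- The `θ`-boundary `∂θA = A^{+θ} ∖ A^{-θ}`. -/
noncomputable def bdry (R : CellSpace G M) (S : Set G) (A : Set M) (θ : ℕ) : Set M :=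
  R.clos S A θ \ R.inter S A θ

end CellSpace

/-- The set `X_A` of restrictions to `A` of the elements of `X`. -/
def restr (A : Set M) (X : Set (M → Q)) : Set (A → Q) :=
  (fun x : M → Q => A.restrict x) '' X

/-- The pattern `p` (with domain `A`) semi-occurs in the configuration `c`:
there is `h ∈ H` with `h ⊛ p = c↾_{h ▷ dom p}`. -/
def SemiOccurs (R : CellSpace G M) (H : Subgroup G) {A : Set M} (p : A → Q)
    (c : M → Q) : Prop :=
  ∃ h ∈ H, ∀ a : A, c (R.act h ↑a) = p a

/-- The pattern `p` (with domain `A`) occurs at `t` in the configuration `c`: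
`t ⊛' p = c↾_{t ↝ A}`. -/
def OccursAt (R : CellSpace G M) {A : Set M} (p : A → Q) (t : M) (c : M → Q) : Prop :=
  ∀ a : A, c (R.nAct t ↑a) = p a

/-- The pattern `p` is allowed in `X`: it semi-occurs in some point of `X`. -/
def Allowed (R : CellSpace G M) (H : Subgroup G) (X : Set (M → Q)) {A : Set M}
    (p : A → Q) : Prop :=
  ∃ x ∈ X, SemiOccurs R H p x

/-- The set `⟨𝔉⟩` generated by a set `𝔉` of forbidden patterns. -/
def Generated (R : CellSpace G M) (H : Subgroup G) (𝔉 : Set (Σ A : Set M, A → Q)) :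
    Set (M → Q) :=
  {c : M → Q | ∀ f ∈ 𝔉, ¬ SemiOccurs R H f.2 c}

/-- `X` is a subshift of `Q^M`: it is generated by a set of blocks. -/
def IsSubshift (R : CellSpace G M) (H : Subgroup G) (X : Set (M → Q)) : Prop :=
  ∃ 𝔉 : Set (Σ A : Set M, A → Q), (∀ f ∈ 𝔉, f.1.Finite) ∧ X = Generated R H 𝔉

/-- `X` is a subshift of finite type: it is generated by a finite set of blocks. -/
def IsSubshiftFT (R : CellSpace G M) (H : Subgroup G) (X : Set (M → Q)) : Prop :=
  ∃ 𝔉 : Set (Σ A : Set M, A → Q), 𝔉.Finite ∧ (∀ f ∈ 𝔉, f.1.Finite) ∧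
    X = Generated R H 𝔉

/-- `X` is a `κ`-step subshift: it is generated by a set of `B(κ)`-blocks. -/
def IsStep (R : CellSpace G M) (S : Set G) (H : Subgroup G) (X : Set (M → Q))
    (κ : ℕ) : Prop :=
  ∃ 𝔉 : Set (Σ A : Set M, A → Q), (∀ f ∈ 𝔉, f.1 = R.ball S R.m0 κ) ∧
    X = Generated R H 𝔉

/-- `X` is `κ`-strongly irreducible. -/
def IsStronglyIrr (R : CellSpace G M) (S : Set G) (H : Subgroup G)
    (X : Set (M → Q)) (κ : ℕ) : Prop :=
  ∀ (A B : Set M), A.Finite → B.Finite → ∀ (p : A → Q) (p' : B → Q),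
    Allowed R H X p → Allowed R H X p' →
    (∀ a ∈ A, ∀ b ∈ B, κ + 1 ≤ R.dist S a b) →
    ∃ x ∈ X, A.restrict x = p ∧ B.restrict x = p'

/-- `X` has `ρ`-bounded propagation. -/
def HasBoundedProp (R : CellSpace G M) (S : Set G) (X : Set (M → Q)) (ρ : ℕ) : Prop :=
  ∀ F : Set M, F.Finite → ∀ p : F → Q,
    (∀ f ∈ F, ∃ x ∈ X, ∀ (m : M) (hm : m ∈ R.ball S f ρ ∩ F), p ⟨m, hm.2⟩ = x m) →
    ∃ x ∈ X, F.restrict x = p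

/-- `Δ` is a `κ`-local map from `X` to `Y`. -/
def IsLocalMap (R : CellSpace G M) (S : Set G) (H : Subgroup G)
    (X Y : Set (M → Q)) (Δ : (M → Q) → (M → Q)) (κ : ℕ) : Prop :=
  Set.MapsTo Δ X Y ∧
  ∃ N : Set M, N ⊆ R.ball S R.m0 κ ∧
    (∀ g₀ : G, R.stab g₀ → ∀ n ∈ N, R.act g₀ n ∈ N) ∧
    ∃ δ : (N → Q) → Q,
      (∀ h₀ ∈ H, R.stab h₀ →
        ∀ ℓ ∈ restr N X, ∀ ℓ' : N → Q,
          (∀ (n : M) (hn : n ∈ N) (hn' : R.act h₀⁻¹ n ∈ N),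
            ℓ' ⟨n, hn⟩ = ℓ ⟨R.act h₀⁻¹ n, hn'⟩) →
          δ ℓ' = δ ℓ) ∧
      ∀ x ∈ X, ∀ m : M, Δ x m = δ (fun n : N => x (R.nAct m ↑n))

/-- `Δ` is pre-injective on `X`. -/
def PreInjective (X : Set (M → Q)) (Δ : (M → Q) → (M → Q)) : Prop :=
  ∀ x ∈ X, ∀ x' ∈ X, Δ x = Δ x' → {m : M | x m ≠ x' m}.Finite → x = x'

/-- The cell space `R` is right amenable: there is a finitely additive probability
measure on the power set of `M` that is semi-invariant under the right semi-action. -/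
def RightAmenable (R : CellSpace G M) : Prop :=
  ∃ μ : Set M → ℝ, (∀ A : Set M, 0 ≤ μ A) ∧ μ Set.univ = 1 ∧
    (∀ A B : Set M, Disjoint A B → μ (A ∪ B) = μ A + μ B) ∧
    ∀ (g : G) (A : Set M), Set.InjOn (fun m => R.sAct m g) A →
      μ ((fun m => R.sAct m g) '' A) = μ A

/-- `F` is a right Følner net in `R` (indexed by the directed set `I`). -/
def IsFolnerNet (R : CellSpace G M) (S : Set G) {I : Type*} [Preorder I]
    (F : I → Set M) : Prop :=
  (∀ i, (F i).Nonempty) ∧ (∀ i, (F i).Finite) ∧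
  ∀ ρ : ℕ, Tendsto (fun i => ((R.bdry S (F i) ρ).ncard : ℝ) / ((F i).ncard : ℝ))
    atTop (nhds 0)

/-- The entropy of `X ⊆ Q^M` with respect to the net `F`:
`limsup_i log|X_{F_i}| / |F_i|`. -/
noncomputable def entropy (R : CellSpace G M) (S : Set G) {I : Type*} [Preorder I]
    (F : I → Set M) (X : Set (M → Q)) : ℝ :=
  limsup (fun i => Real.log ((restr (F i) X).ncard : ℝ) / ((F i).ncard : ℝ)) atTop

/-- `T` is a `⟨θ, κ, θ'⟩`-tiling of `R`. -/
def IsTiling (R : CellSpace G M) (S : Set G) (θ κ θ' : ℕ) (T : Set M) : Prop :=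
  (∀ t ∈ T, ∀ t' ∈ T, t ≠ t' →
    ∀ a ∈ R.ball S t θ, ∀ b ∈ R.ball S t' θ, κ + 1 ≤ R.dist S a b) ∧
  ∀ m : M, ∃ t ∈ T, m ∈ R.ball S t θ'

/-- The action `h ⊛ c` of `h ∈ G` on configurations: `(h ⊛ c)(m) = c(h⁻¹ ▷ m)`. -/
def shiftAct (R : CellSpace G M) (h : G) (c : M → Q) : M → Q :=
  fun m => c (R.act h⁻¹ m)

section Lemmas

variable {R : CellSpace G M} {S : Set G}

namespace CellSpace

lemma act_inv_act (R : CellSpace G M) (g : G) (m : M) : R.act g⁻¹ (R.act g m) = m := by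
  rw [← R.mul_act, inv_mul_cancel, R.one_act]

lemma act_act_inv (R : CellSpace G M) (g : G) (m : M) : R.act g (R.act g⁻¹ m) = m := by
  rw [← R.mul_act, mul_inv_cancel, R.one_act]

lemma act_injective (R : CellSpace G M) (g : G) : Function.Injective (R.act g) := by
  intro a b h
  have := congrArg (R.act g⁻¹) h
  rwa [R.act_inv_act, R.act_inv_act] at this

lemma coord_inv_act (R : CellSpace G M) (m : M) : R.act (R.coord m)⁻¹ m = R.m0 := by
  apply R.act_injective (R.coord m)
  rw [R.act_act_inv, R.coord_act]

lemma stab_inv {g : G} (h : R.stab g) : R.stab g⁻¹ := by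
  unfold stab at h ⊢
  conv_lhs => rw [← h]
  rw [R.act_inv_act]

lemma nAct_eq (R : CellSpace G M) (m n : M) : R.nAct m n = R.act (R.coord m) n := by
  unfold nAct
  rw [R.mul_act, R.coord_act]

lemma chain_zero (m : M) : R.Chain S m m 0 :=
  ⟨fun _ => m, rfl, rfl, fun i hi => absurd hi (by omega)⟩

lemma Chain.prefix {m m' : M} {n : ℕ} (h : R.Chain S m m' n) (i : ℕ) (hi : i ≤ n) :
    ∃ mi : M, R.Chain S m mi i ∧ R.Chain S mi m' (n - i) := by
  obtain ⟨f, hf0, hfn, hf⟩ := h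
  refine ⟨f i, ⟨f, hf0, rfl, fun j hj => hf j (by omega)⟩,
    ⟨fun j => f (i + j), rfl, by show f (i + (n - i)) = m'; rw [show i + (n - i) = n by omega, hfn], ?_⟩⟩
  intro j hj
  obtain ⟨s, hs, hstep⟩ := hf (i + j) (by omega)
  refine ⟨s, hs, ?_⟩
  show f (i + (j + 1)) = R.sAct (f (i + j)) s
  rw [show i + (j+1) = (i+j)+1 by omega, hstep]

lemma Chain.trans {m m' m'' : M} {a b : ℕ} (h1 : R.Chain S m m' a) (h2 : R.Chain S m' m'' b) :
    R.Chain S m m'' (a + b) := by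
  obtain ⟨f, hf0, hfa, hf⟩ := h1
  obtain ⟨g, hg0, hgb, hg⟩ := h2
  refine ⟨fun i => if i ≤ a then f i else g (i - a), by simp [hf0], ?_, ?_⟩
  · show (if a + b ≤ a then f (a + b) else g (a + b - a)) = m''
    by_cases hb : b = 0
    · subst hb
      rw [if_pos (by omega), show a + 0 = a by omega, hfa, ← hg0]
      exact hgb
    · rw [if_neg (by omega), show a + b - a = b by omega]
      exact hgb
  · intro i hi
    show ∃ s ∈ S, (if i+1 ≤ a then f (i+1) else g (i+1-a)) =
      R.sAct (if i ≤ a then f i else g (i-a)) s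
    by_cases h : i + 1 ≤ a
    · obtain ⟨s, hs, hstep⟩ := hf i (by omega)
      exact ⟨s, hs, by rw [if_pos h, if_pos (show i ≤ a by omega)]; exact hstep⟩
    · by_cases h' : i ≤ a
      · have hia : i = a := by omega
        obtain ⟨s, hs, hstep⟩ := hg 0 (by omega)
        refine ⟨s, hs, ?_⟩
        rw [if_neg h, if_pos h', show i + 1 - a = 1 by omega, hia, hfa, ← hg0]
        exact hstep
      · obtain ⟨s, hs, hstep⟩ := hg (i - a) (by omega)
        refine ⟨s, hs, ?_⟩
        rw [if_neg h, if_neg h', show i + 1 - a = (i - a) + 1 by omega]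
        exact hstep

lemma step_rev (hS : R.IsRightGenSet S) {m m' : M} {s : G} (hs : s ∈ S)
    (h : m' = R.sAct m s) : ∃ s' ∈ S, m = R.sAct m' s' := by
  have hstab : R.stab ((R.coord m')⁻¹ * (R.coord m * s)) := by
    unfold stab
    rw [R.mul_act]
    show R.act (R.coord m')⁻¹ (R.sAct m s) = R.m0
    rw [← h, R.coord_inv_act]
  refine ⟨(R.coord m')⁻¹ * (R.coord m * s) * s⁻¹,
    hS.stab_mul _ hstab s⁻¹ (hS.symm s hs), ?_⟩
  unfold sAct
  have : R.coord m' * ((R.coord m')⁻¹ * (R.coord m * s) * s⁻¹) = R.coord m := by group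
  rw [this, R.coord_act]

lemma Chain.symm (hS : R.IsRightGenSet S) {m m' : M} {n : ℕ} (h : R.Chain S m m' n) :
    R.Chain S m' m n := by
  obtain ⟨f, hf0, hfn, hf⟩ := h
  refine ⟨fun i => f (n - i), by simp [hfn], by simp [hf0], ?_⟩
  intro i hi
  obtain ⟨s, hs, hstep⟩ := hf (n - (i+1)) (by omega)
  obtain ⟨s', hs', h'⟩ := step_rev hS hs
    (show f (n - i) = R.sAct (f (n - (i+1))) s by
      rw [show n - i = (n - (i+1)) + 1 by omega, hstep])
  exact ⟨s', hs', h'⟩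

lemma exists_chain (hS : R.IsRightGenSet S) (m m' : M) : ∃ n, R.Chain S m m' n := by
  obtain ⟨k, f, hf0, hfk, hf⟩ := hS.generates m
  obtain ⟨k', f', hf0', hfk', hf'⟩ := hS.generates m'
  exact ⟨k + k', Chain.trans (Chain.symm hS ⟨f, hf0, hfk, hf⟩) ⟨f', hf0', hfk', hf'⟩⟩

lemma chain_dist (hS : R.IsRightGenSet S) (m m' : M) :
    R.Chain S m m' (R.dist S m m') :=
  Nat.sInf_mem (exists_chain hS m m')

lemma dist_le {m m' : M} {n : ℕ} (h : R.Chain S m m' n) : R.dist S m m' ≤ n :=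
  Nat.sInf_le h

lemma dist_self (m : M) : R.dist S m m = 0 :=
  Nat.le_zero.mp (dist_le (chain_zero m))

lemma eq_of_dist_eq_zero (hS : R.IsRightGenSet S) {m m' : M}
    (h : R.dist S m m' = 0) : m = m' := by
  have hc := chain_dist hS m m'
  rw [h] at hc
  obtain ⟨f, hf0, hfn, -⟩ := hc
  rw [← hf0, hfn]

lemma dist_triangle (hS : R.IsRightGenSet S) (m m' m'' : M) :
    R.dist S m m'' ≤ R.dist S m m' + R.dist S m' m'' :=
  dist_le (Chain.trans (chain_dist hS m m') (chain_dist hS m' m''))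

lemma dist_symm (hS : R.IsRightGenSet S) (m m' : M) :
    R.dist S m m' = R.dist S m' m :=
  le_antisymm (dist_le (Chain.symm hS (chain_dist hS m' m)))
    (dist_le (Chain.symm hS (chain_dist hS m m')))

lemma act_sAct (hS : R.IsRightGenSet S) {s : G} (hs : s ∈ S) (g : G) (m : M) :
    ∃ s' ∈ S, R.act g (R.sAct m s) = R.sAct (R.act g m) s' := by
  have hstab : R.stab ((R.coord (R.act g m))⁻¹ * (g * R.coord m)) := by
    unfold stab
    rw [R.mul_act, R.mul_act, R.coord_act, R.coord_inv_act]
  refine ⟨(R.coord (R.act g m))⁻¹ * (g * R.coord m) * s,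
    hS.stab_mul _ hstab s hs, ?_⟩
  unfold sAct
  rw [← R.mul_act]
  congr 1
  group

lemma Chain.act (hS : R.IsRightGenSet S) (g : G) {m m' : M} {n : ℕ}
    (h : R.Chain S m m' n) : R.Chain S (R.act g m) (R.act g m') n := by
  obtain ⟨f, hf0, hfn, hf⟩ := h
  refine ⟨fun i => R.act g (f i), by show R.act g (f 0) = R.act g m; rw [hf0],
    by show R.act g (f n) = R.act g m'; rw [hfn], ?_⟩
  intro i hi
  obtain ⟨s, hs, hstep⟩ := hf i hi
  obtain ⟨s', hs', h'⟩ := act_sAct hS hs g (f i)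
  refine ⟨s', hs', ?_⟩
  show R.act g (f (i+1)) = R.sAct (R.act g (f i)) s'
  rw [hstep]
  exact h'

lemma dist_act (hS : R.IsRightGenSet S) (g : G) (m m' : M) :
    R.dist S (R.act g m) (R.act g m') = R.dist S m m' := by
  refine le_antisymm (dist_le (Chain.act hS g (chain_dist hS m m'))) ?_
  have := dist_le (Chain.act hS g⁻¹ (chain_dist hS (R.act g m) (R.act g m')))
  rwa [R.act_inv_act, R.act_inv_act] at this

lemma mem_ball {m m' : M} {ρ : ℕ} : m' ∈ R.ball S m ρ ↔ R.dist S m m' ≤ ρ := Iff.rfl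

lemma self_mem_ball (m : M) (ρ : ℕ) : m ∈ R.ball S m ρ := by
  rw [mem_ball, dist_self]
  exact Nat.zero_le ρ

lemma ball_mono {m : M} {ρ ρ' : ℕ} (h : ρ ≤ ρ') : R.ball S m ρ ⊆ R.ball S m ρ' :=
  fun _ hm => le_trans hm h

lemma ball_subset_ball (hS : R.IsRightGenSet S) {m m' : M} {a b : ℕ}
    (h : R.dist S m m' ≤ a) : R.ball S m' b ⊆ R.ball S m (a + b) := by
  intro x hx
  rw [mem_ball]
  calc R.dist S m x ≤ R.dist S m m' + R.dist S m' x := dist_triangle hS m m' x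
    _ ≤ a + b := Nat.add_le_add h hx

lemma act_ball (hS : R.IsRightGenSet S) (g : G) (m : M) (ρ : ℕ) :
    R.act g '' R.ball S m ρ = R.ball S (R.act g m) ρ := by
  ext x
  constructor
  · rintro ⟨y, hy, rfl⟩
    rw [mem_ball, dist_act hS]
    exact hy
  · intro hx
    refine ⟨R.act g⁻¹ x, ?_, R.act_act_inv g x⟩
    rw [mem_ball]
    have : R.dist S (R.act g⁻¹ (R.act g m)) (R.act g⁻¹ x) = R.dist S (R.act g m) x :=
      dist_act hS g⁻¹ _ _
    rw [R.act_inv_act] at this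
    rw [this]
    exact hx

lemma ball_finite (hS : R.IsRightGenSet S) (m : M) (ρ : ℕ) :
    (R.ball S m ρ).Finite := by
  induction ρ with
  | zero =>
    refine Set.Finite.subset (Set.finite_singleton m) ?_
    intro x hx
    rw [mem_ball, Nat.le_zero] at hx
    exact (eq_of_dist_eq_zero hS hx).symm ▸ rfl
  | succ ρ ih =>
    have hsub : R.ball S m (ρ+1) ⊆
        R.ball S m ρ ∪ ⋃ m' ∈ R.ball S m ρ, (fun s => R.sAct m' s) '' S := by
      intro x hx
      rw [mem_ball] at hx
      rcases Nat.lt_or_ge (R.dist S m x) (ρ+1) with h | h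
      · exact Or.inl (by rw [mem_ball]; omega)
      · have hd : R.dist S m x = ρ + 1 := by omega
        have hc := chain_dist hS m x
        rw [hd] at hc
        obtain ⟨mi, h1, h2⟩ := hc.prefix ρ (by omega)
        refine Or.inr ?_
        obtain ⟨f, hf0, hfn, hf⟩ := h2
        obtain ⟨s, hs, hstep⟩ := hf 0 (by omega)
        refine Set.mem_biUnion (show mi ∈ R.ball S m ρ from dist_le h1) ⟨s, hs, ?_⟩
        show R.sAct mi s = x
        rw [← hf0, ← hstep, ← hfn]
        congr 1
        omega
    refine Set.Finite.subset (Set.Finite.union ih ?_) hsub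
    exact Set.Finite.biUnion ih (fun m' _ => Set.Finite.image _ hS.finite)

lemma ncard_ball (hS : R.IsRightGenSet S) (m : M) (ρ : ℕ) :
    (R.ball S m ρ).ncard = (R.ball S R.m0 ρ).ncard := by
  conv_lhs => rw [← R.coord_act m]
  rw [← act_ball hS (R.coord m) R.m0 ρ,
    Set.ncard_image_of_injective _ (R.act_injective (R.coord m))]

end CellSpace

lemma shiftAct_shiftAct (R : CellSpace G M) (h h' : G) (c : M → Q) :
    shiftAct R h (shiftAct R h' c) = shiftAct R (h * h') c := by
  funext m
  unfold shiftAct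
  rw [← R.mul_act]
  congr 1
  group

lemma shiftAct_act (R : CellSpace G M) (h : G) (c : M → Q) (m : M) :
    shiftAct R h c (R.act h m) = c m := by
  unfold shiftAct
  rw [R.act_inv_act]

variable {H : Subgroup G}

lemma semiOccurs_shiftAct {A : Set M} {p : A → Q} {c : M → Q} {h : G} (hh : h ∈ H)
    (hocc : SemiOccurs R H p (shiftAct R h c)) : SemiOccurs R H p c := by
  obtain ⟨h', hh', hp⟩ := hocc
  refine ⟨h⁻¹ * h', mul_mem (inv_mem hh) hh', fun a => ?_⟩
  have := hp a
  unfold shiftAct at this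
  rwa [← R.mul_act] at this

lemma shiftAct_mem_generated {𝔉 : Set (Σ A : Set M, A → Q)} {c : M → Q}
    (hc : c ∈ Generated R H 𝔉) {h : G} (hh : h ∈ H) :
    shiftAct R h c ∈ Generated R H 𝔉 :=
  fun f hf hocc => hc f hf (semiOccurs_shiftAct hh hocc)

lemma shift_mem {X : Set (M → Q)} (hXgen : ∃ 𝔉, X = Generated R H 𝔉)
    {c : M → Q} (hc : c ∈ X) {g : G} (hg : g ∈ H) : shiftAct R g c ∈ X := by
  obtain ⟨𝔉, rfl⟩ := hXgen
  exact shiftAct_mem_generated hc hg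

lemma restrict_mem_restr {X : Set (M → Q)} {x : M → Q} (hx : x ∈ X) (A : Set M) :
    A.restrict x ∈ restr A X := ⟨x, hx, rfl⟩

lemma allowed_of_mem {X : Set (M → Q)} {x : M → Q} (hx : x ∈ X) (A : Set M) :
    Allowed R H X (A.restrict x) :=
  ⟨x, hx, 1, one_mem H, fun a => by rw [R.one_act]; rfl⟩

lemma finite_subset_ball (hS : R.IsRightGenSet S) (A : Set M) (hA : A.Finite) :
    ∃ κ, A ⊆ R.ball S R.m0 κ := by
  classical
  refine ⟨hA.toFinset.sup (R.dist S R.m0), fun a ha => ?_⟩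
  rw [CellSpace.mem_ball]
  exact Finset.le_sup (f := R.dist S R.m0) (hA.mem_toFinset.mpr ha)

lemma exists_sft_radius (hS : R.IsRightGenSet S) {𝔉 : Set (Σ A : Set M, A → Q)}
    (h1 : 𝔉.Finite) (h2 : ∀ f ∈ 𝔉, f.1.Finite) :
    ∃ κ, ∀ f ∈ 𝔉, f.1 ⊆ R.ball S R.m0 κ := by
  have hfin : (⋃ f ∈ 𝔉, f.1).Finite := h1.biUnion h2
  obtain ⟨κ, hκ⟩ := finite_subset_ball hS _ hfin
  exact ⟨κ, fun f hf => (Set.subset_biUnion_of_mem hf).trans hκ⟩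

lemma mem_generated_of_locally (hS : R.IsRightGenSet S) {𝔉 : Set (Σ A : Set M, A → Q)}
    {κX : ℕ} (hdom : ∀ f ∈ 𝔉, f.1 ⊆ R.ball S R.m0 κX) {w : M → Q}
    (hw : ∀ m : M, ∃ x ∈ Generated R H 𝔉, Set.EqOn w x (R.ball S m κX)) :
    w ∈ Generated R H 𝔉 := by
  intro f hf hocc
  obtain ⟨h, hh, hp⟩ := hocc
  obtain ⟨x, hx, heq⟩ := hw (R.act h R.m0)
  refine hx f hf ⟨h, hh, fun a => ?_⟩
  have hmem : R.act h ↑a ∈ R.ball S (R.act h R.m0) κX := by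
    rw [CellSpace.mem_ball, CellSpace.dist_act hS]
    exact hdom f hf a.2
  rw [← heq hmem]
  exact hp a

lemma nAct_mem_ball (hS : R.IsRightGenSet S) {κ : ℕ} {n : M}
    (hn : n ∈ R.ball S R.m0 κ) (m : M) : R.nAct m n ∈ R.ball S m κ := by
  rw [CellSpace.nAct_eq, CellSpace.mem_ball]
  have heq : R.dist S m (R.act (R.coord m) n) = R.dist S R.m0 n := by
    have h2 := CellSpace.dist_act hS (R.coord m) R.m0 n
    rwa [R.coord_act] at h2
  rw [heq]
  exact hn

variable {X Y : Set (M → Q)} {Δ : (M → Q) → (M → Q)} {κΔ : ℕ}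

lemma localMap_eqOn (hS : R.IsRightGenSet S) (hL : IsLocalMap R S H X Y Δ κΔ)
    {x y : M → Q} (hx : x ∈ X) (hy : y ∈ X) {m : M}
    (h : Set.EqOn x y (R.ball S m κΔ)) : Δ x m = Δ y m := by
  obtain ⟨-, N, hNball, -, δ, -, hδ⟩ := hL
  rw [hδ x hx m, hδ y hy m]
  congr 1
  funext n
  exact h (nAct_mem_ball hS (hNball n.2) m)

lemma localMap_equivariant (hS : R.IsRightGenSet S) (hH : ∀ m : M, R.coord m ∈ H)
    (hXgen : ∃ 𝔉, X = Generated R H 𝔉) (hL : IsLocalMap R S H X Y Δ κΔ)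
    {x : M → Q} (hx : x ∈ X) {h : G} (hh : h ∈ H) :
    Δ (shiftAct R h x) = shiftAct R h (Δ x) := by
  obtain ⟨-, N, hNball, hNinv, δ, hδinv, hδ⟩ := hL
  funext m
  have hxh : shiftAct R h x ∈ X := shift_mem hXgen hx hh
  rw [hδ _ hxh m]
  show _ = Δ x (R.act h⁻¹ m)
  rw [hδ x hx (R.act h⁻¹ m)]
  set m' := R.act h⁻¹ m with hm'
  set g₀ : G := (R.coord m')⁻¹ * h⁻¹ * R.coord m with hg₀
  have hstab : R.stab g₀ := by
    unfold CellSpace.stab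
    rw [hg₀, mul_assoc, R.mul_act, R.mul_act, R.coord_act, ← hm', R.coord_inv_act]
  have hg₀H : g₀ ∈ H := mul_mem (mul_mem (inv_mem (hH m')) (inv_mem hh)) (hH m)
  have hy : (fun p => x (R.act (R.coord m') p)) ∈ X := by
    have heq : (fun p => x (R.act (R.coord m') p)) = shiftAct R (R.coord m')⁻¹ x := by
      funext p
      unfold shiftAct
      rw [inv_inv]
    rw [heq]
    exact shift_mem hXgen hx (inv_mem (hH m'))
  refine hδinv g₀⁻¹ (inv_mem hg₀H) (CellSpace.stab_inv hstab)
    (fun n => x (R.nAct m' ↑n)) ?_ _ ?_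
  · refine ⟨_, hy, ?_⟩
    funext n
    show x (R.act (R.coord m') ↑n) = x (R.nAct m' ↑n)
    rw [CellSpace.nAct_eq]
  · intro n hn hn'
    show shiftAct R h x (R.nAct m n) = x (R.nAct m' (R.act g₀⁻¹⁻¹ n))
    rw [inv_inv]
    unfold shiftAct
    rw [CellSpace.nAct_eq, CellSpace.nAct_eq, ← R.mul_act, ← R.mul_act]
    congr 2
    rw [hg₀]
    group

lemma glue (hS : R.IsRightGenSet S) {X : Set (M → Q)} {κs θ : ℕ}
    (hSI : IsStronglyIrr R S H X κs) (O : Set M) (hO : O.Finite)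
    {z : M → Q} (hz : z ∈ X) (ε : Finset M)
    (hsep1 : ∀ t ∈ ε, ∀ a ∈ R.ball S t θ, ∀ b ∈ O, κs + 1 ≤ R.dist S a b)
    (hsep2 : ∀ t ∈ ε, ∀ t' ∈ ε, t ≠ t' →
      ∀ a ∈ R.ball S t θ, ∀ b ∈ R.ball S t' θ, κs + 1 ≤ R.dist S a b)
    (xt : M → (M → Q)) (hxt : ∀ t ∈ ε, xt t ∈ X) :
    ∃ x ∈ X, Set.EqOn x z O ∧ ∀ t ∈ ε, Set.EqOn x (xt t) (R.ball S t θ) := by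
  classical
  revert hsep1 hsep2 hxt
  induction ε using Finset.induction_on with
  | empty =>
    intro _ _ _
    exact ⟨z, hz, Set.eqOn_refl z O, by simp⟩
  | @insert t ε htε ih =>
    intro hsep1 hsep2 hxt
    obtain ⟨x', hx', hxO, hxball⟩ :=
      ih (fun t' ht' => hsep1 t' (Finset.mem_insert_of_mem ht'))
        (fun a ha b hb hab => hsep2 _ (Finset.mem_insert_of_mem ha) _
          (Finset.mem_insert_of_mem hb) hab)
        (fun t' ht' => hxt t' (Finset.mem_insert_of_mem ht'))
    set A := R.ball S t θ with hA
    set B := O ∪ ⋃ t' ∈ (ε : Set M), R.ball S t' θ with hB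
    have hAfin : A.Finite := CellSpace.ball_finite hS t θ
    have hBfin : B.Finite :=
      hO.union (Set.Finite.biUnion ε.finite_toSet
        (fun _ _ => CellSpace.ball_finite hS _ _))
    have hsepAB : ∀ a ∈ A, ∀ b ∈ B, κs + 1 ≤ R.dist S a b := by
      intro a ha b hb
      rcases hb with hb | hb
      · exact hsep1 t (Finset.mem_insert_self t ε) a ha b hb
      · simp only [Set.mem_iUnion] at hb
        obtain ⟨t', ht', hbt⟩ := hb
        refine hsep2 t (Finset.mem_insert_self t ε) t'
          (Finset.mem_insert_of_mem ht') (fun hteq => htε (hteq ▸ ht')) a ha b hbt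
    obtain ⟨x, hx, hres1, hres2⟩ := hSI A B hAfin hBfin (A.restrict (xt t))
      (B.restrict x') (allowed_of_mem (hxt t (Finset.mem_insert_self t ε)) A)
      (allowed_of_mem hx' B) hsepAB
    refine ⟨x, hx, ?_, ?_⟩
    · intro o ho
      have hxo : x o = x' o := congrFun hres2 ⟨o, Or.inl ho⟩
      rw [hxo]
      exact hxO ho
    · intro t' ht'
      rcases Finset.mem_insert.mp ht' with rfl | ht'
      · intro a ha
        exact congrFun hres1 ⟨a, ha⟩
      · intro a ha
        have hxa : x a = x' a := by
          refine congrFun hres2 ⟨a, Or.inr ?_⟩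
          simp only [Set.mem_iUnion]
          exact ⟨t', ht', ha⟩
        rw [hxa]
        exact hxball t' ht' ha

lemma exists_tiling (hS : R.IsRightGenSet S) (θ' : ℕ) :
    ∃ T : Set M, (∀ t ∈ T, ∀ t' ∈ T, t ≠ t' → θ' + 1 ≤ R.dist S t t') ∧
      ∀ m : M, ∃ t ∈ T, R.dist S m t ≤ θ' := by
  have hZ : ∀ c ⊆ {T : Set M | ∀ t ∈ T, ∀ t' ∈ T, t ≠ t' → θ' + 1 ≤ R.dist S t t'},
      IsChain (fun x1 x2 => x1 ⊆ x2) c →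
      ∃ ub ∈ {T : Set M | ∀ t ∈ T, ∀ t' ∈ T, t ≠ t' → θ' + 1 ≤ R.dist S t t'},
        ∀ s ∈ c, s ⊆ ub := by
    intro c hc hchain
    refine ⟨⋃₀ c, ?_, fun s hs => Set.subset_sUnion_of_mem hs⟩
    intro t ht t' ht' hne
    obtain ⟨A, hA, htA⟩ := ht
    obtain ⟨B, hB, htB⟩ := ht'
    rcases hchain.total hA hB with hAB | hBA
    · exact hc hB t (hAB htA) t' htB hne
    · exact hc hA t htA t' (hBA htB) hne
  obtain ⟨T, hTmem, hTmax⟩ := zorn_subset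
    {T : Set M | ∀ t ∈ T, ∀ t' ∈ T, t ≠ t' → θ' + 1 ≤ R.dist S t t'} hZ
  · refine ⟨T, hTmem, fun m => ?_⟩
    by_contra hc
    push_neg at hc
    have hmT : m ∉ T := by
      intro hm
      have := hc m hm
      rw [CellSpace.dist_self] at this
      omega
    have hins : insert m T ∈
        {T : Set M | ∀ t ∈ T, ∀ t' ∈ T, t ≠ t' → θ' + 1 ≤ R.dist S t t'} := by
      intro t ht t' ht' hne
      rcases Set.mem_insert_iff.mp ht with h1 | h1
      · rcases Set.mem_insert_iff.mp ht' with h2 | h2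
        · exact absurd (h1.trans h2.symm) hne
        · have hlt := hc t' h2
          rw [h1]
          omega
      · rcases Set.mem_insert_iff.mp ht' with h2 | h2
        · have hlt := hc t h1
          rw [h2, CellSpace.dist_symm hS]
          omega
        · exact hTmem t h1 t' h2 hne
    have heq := hTmax hins (Set.subset_insert m T)
    exact hmT (heq (Set.mem_insert m T))

lemma ncard_prod {α β : Type*} (s : Set α) (t : Set β) :
    (s ×ˢ t).ncard = s.ncard * t.ncard := by
  rw [← Nat.card_coe_set_eq, ← Nat.card_coe_set_eq, ← Nat.card_coe_set_eq,
    Nat.card_congr (Equiv.Set.prod s t), Nat.card_prod]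

lemma restr_eq_image {X : Set (M → Q)} {A B : Set M} (hBA : B ⊆ A) :
    restr B X = (fun (w : ↥A → Q) (b : ↥B) => w ⟨b.1, hBA b.2⟩) '' (restr A X) := by
  ext w
  constructor
  · rintro ⟨x, hx, rfl⟩
    exact ⟨A.restrict x, ⟨x, hx, rfl⟩, rfl⟩
  · rintro ⟨v, ⟨x, hx, rfl⟩, rfl⟩
    exact ⟨x, hx, rfl⟩

lemma restr_ncard_mono [Finite Q] {X : Set (M → Q)} {A B : Set M} (hBA : B ⊆ A)
    (hA : A.Finite) : (restr B X).ncard ≤ (restr A X).ncard := by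
  haveI := hA.to_subtype
  rw [restr_eq_image hBA]
  exact Set.ncard_image_le (Set.toFinite _)

lemma restr_ncard_le_mul [Finite Q] {X : Set (M → Q)} {A B : Set M} (hBA : B ⊆ A)
    (hA : A.Finite) :
    (restr A X).ncard ≤ (restr B X).ncard * Nat.card Q ^ (A \ B).ncard := by
  classical
  haveI := hA.to_subtype
  haveI := (hA.subset (Set.diff_subset (s := A) (t := B))).to_subtype
  haveI := (hA.subset hBA).to_subtype
  set f : (↥A → Q) → (↥B → Q) × (↥(A \ B) → Q) :=
    fun w => (fun b => w ⟨b.1, hBA b.2⟩, fun d => w ⟨d.1, d.2.1⟩) with hf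
  have hinj : Set.InjOn f (restr A X) := by
    intro w _ w' _ h
    funext a
    by_cases hb : (a : M) ∈ B
    · exact congrFun (congrArg Prod.fst h) ⟨a, hb⟩
    · exact congrFun (congrArg Prod.snd h) ⟨a, a.2, hb⟩
  have hmap : ∀ w ∈ restr A X, f w ∈ (restr B X) ×ˢ (Set.univ : Set (↥(A \ B) → Q)) := by
    rintro w ⟨x, hx, rfl⟩
    exact ⟨⟨x, hx, rfl⟩, Set.mem_univ _⟩
  have hle := Set.ncard_le_ncard_of_injOn f hmap hinj (Set.toFinite _)
  rwa [ncard_prod, Set.ncard_univ, Nat.card_fun, Nat.card_coe_set_eq] at hle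

lemma sum_ncard_le_ncard {ι β : Type*} [DecidableEq ι] (A : Finset ι) (f : ι → Set β)
    (W : Set β) (hW : W.Finite)
    (hdisj : ∀ i ∈ A, ∀ j ∈ A, i ≠ j → Disjoint (f i) (f j))
    (hsub : ∀ i ∈ A, f i ⊆ W) :
    ∑ i ∈ A, (f i).ncard ≤ W.ncard := by
  classical
  revert hW hdisj hsub
  induction A using Finset.induction_on generalizing W with
  | empty => intro hW _ _; simp
  | @insert a A haA ih =>
    intro hW hdisj hsub
    rw [Finset.sum_insert haA]
    have h1 : ∀ i ∈ A, f i ⊆ W \ f a := by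
      intro i hi
      refine Set.subset_diff.mpr ⟨hsub i (Finset.mem_insert_of_mem hi), ?_⟩
      exact hdisj i (Finset.mem_insert_of_mem hi) a (Finset.mem_insert_self a A)
        (fun h => haA (h ▸ hi))
    have h2 := ih (W \ f a) hW.diff (fun i hi j hj hij =>
      hdisj i (Finset.mem_insert_of_mem hi) j (Finset.mem_insert_of_mem hj) hij) h1
    have h3 : (W \ f a).ncard + (f a).ncard = W.ncard :=
      Set.ncard_diff_add_ncard_of_subset (hsub a (Finset.mem_insert_self a A)) hW
    omega

lemma ncard_biUnion_le {ι β : Type*} [DecidableEq ι] (A : Finset ι) (f : ι → Set β) :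
    (⋃ i ∈ (A : Set ι), f i).ncard ≤ ∑ i ∈ A, (f i).ncard := by
  classical
  induction A using Finset.induction_on with
  | empty => simp
  | @insert a A haA ih =>
    rw [Finset.sum_insert haA]
    have hrw : (⋃ i ∈ ((insert a A : Finset ι) : Set ι), f i)
        = f a ∪ ⋃ i ∈ (A : Set ι), f i := by
      simp [Finset.coe_insert, Set.biUnion_insert]
    rw [hrw]
    calc (f a ∪ ⋃ i ∈ (A : Set ι), f i).ncard
        ≤ (f a).ncard + (⋃ i ∈ (A : Set ι), f i).ncard := Set.ncard_union_le _ _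
      _ ≤ (f a).ncard + ∑ i ∈ A, (f i).ncard := by omega

lemma sum_powerset_pow {ι : Type*} [DecidableEq ι] (A : Finset ι) (r : ℝ) :
    ∑ t ∈ A.powerset, r ^ t.card = (r + 1) ^ A.card := by
  calc ∑ t ∈ A.powerset, r ^ t.card
      = ∑ t ∈ A.powerset, (∏ _i ∈ t, r) * ∏ _i ∈ A \ t, (1:ℝ) := by
        refine Finset.sum_congr rfl (fun t _ => ?_)
        rw [Finset.prod_const, Finset.prod_const, one_pow, mul_one]
    _ = ∏ i ∈ A, (r + 1) := (Finset.prod_add (fun _ => r) (fun _ => 1) A).symm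
    _ = (r + 1) ^ A.card := Finset.prod_const _

lemma stepA (hS : R.IsRightGenSet S) (hH : ∀ m : M, R.coord m ∈ H)
    {X Y : Set (M → Q)} {Δ : (M → Q) → (M → Q)} {κΔ : ℕ}
    (hL : IsLocalMap R S H X Y Δ κΔ)
    {𝔉 : Set (Σ A : Set M, A → Q)} (hXeq : X = Generated R H 𝔉)
    {κX : ℕ} (hdom : ∀ f ∈ 𝔉, f.1 ⊆ R.ball S R.m0 κX)
    {x₁ x₂ : M → Q} (hx₁ : x₁ ∈ X) (hx₂ : x₂ ∈ X) (hΔeq : Δ x₁ = Δ x₂)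
    (hne : ∃ m, x₁ m ≠ x₂ m)
    {θ₀ : ℕ} (hD : ∀ m, x₁ m ≠ x₂ m → m ∈ R.ball S R.m0 θ₀)
    {θ : ℕ} (hθ : θ = θ₀ + 2*κX + 2*κΔ)
    {T : Set M} (hTsep : ∀ t ∈ T, ∀ t' ∈ T, t ≠ t' → 2*θ + 1 ≤ R.dist S t t')
    (x : M → Q) (hx : x ∈ X) :
    ∃ z ∈ X, (∀ t ∈ T, ¬ Set.EqOn z (shiftAct R (R.coord t) x₁) (R.ball S t θ)) ∧
      Δ z = Δ x := by
  classical
  set y₁ : M → (M → Q) := fun t => shiftAct R (R.coord t) x₁ with hy₁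
  set y₂ : M → (M → Q) := fun t => shiftAct R (R.coord t) x₂ with hy₂
  have hXgen : ∃ 𝔉', X = Generated R H 𝔉' := ⟨𝔉, hXeq⟩
  have f1 : ∀ t m, y₁ t m ≠ y₂ t m → m ∈ R.ball S t θ₀ := by
    intro t m hne'
    have hmem : R.act (R.coord t)⁻¹ m ∈ R.ball S R.m0 θ₀ := hD _ hne'
    have hda := CellSpace.dist_act hS (R.coord t)⁻¹ t m
    rw [R.coord_inv_act] at hda
    rw [CellSpace.mem_ball] at hmem ⊢
    rw [← hda]
    exact hmem
  have f2 : ∀ t, y₁ t ∈ X ∧ y₂ t ∈ X :=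
    fun t => ⟨shift_mem hXgen hx₁ (hH t), shift_mem hXgen hx₂ (hH t)⟩
  have f3 : ∀ t ∈ T, ∀ t' ∈ T, t ≠ t' → ∀ m, m ∈ R.ball S t θ → m ∉ R.ball S t' θ := by
    intro t ht t' ht' hne' m hm hm'
    have h1 := hTsep t ht t' ht' hne'
    have h2 := CellSpace.dist_triangle hS t m t'
    rw [CellSpace.dist_symm hS m t'] at h2
    rw [CellSpace.mem_ball] at hm hm'
    omega
  set P : M → Prop := fun t => t ∈ T ∧ Set.EqOn x (y₁ t) (R.ball S t θ) with hP
  have huniq : ∀ t t' m, P t → P t' → m ∈ R.ball S t θ → m ∈ R.ball S t' θ → t = t' := by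
    intro t t' m hPt hPt' hm hm'
    by_contra hne'
    exact f3 t hPt.1 t' hPt'.1 hne' m hm hm'
  set z : M → Q := fun m =>
    if h : ∃ t, P t ∧ m ∈ R.ball S t θ then y₂ h.choose m else x m with hz
  have g1 : ∀ t, P t → Set.EqOn z (y₂ t) (R.ball S t θ) := by
    intro t hPt m hm
    have hex : ∃ t', P t' ∧ m ∈ R.ball S t' θ := ⟨t, hPt, hm⟩
    show (if h : ∃ t, P t ∧ m ∈ R.ball S t θ then y₂ h.choose m else x m) = y₂ t m
    rw [dif_pos hex]
    have hc := hex.choose_spec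
    rw [huniq _ _ m hc.1 hPt hc.2 hm]
  have g2 : ∀ m, (∀ t, P t → m ∉ R.ball S t θ) → z m = x m := by
    intro m hm
    have hnex : ¬ ∃ t, P t ∧ m ∈ R.ball S t θ := by
      rintro ⟨t, hPt, hmt⟩
      exact hm t hPt hmt
    show (if h : ∃ t, P t ∧ m ∈ R.ball S t θ then y₂ h.choose m else x m) = x m
    rw [dif_neg hnex]
  have g3 : ∀ m, z m ≠ x m → ∃ t, P t ∧ m ∈ R.ball S t θ₀ := by
    intro m hzm
    by_cases hex : ∃ t, P t ∧ m ∈ R.ball S t θ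
    · have hc := hex.choose_spec
      set t := hex.choose
      have hzval : z m = y₂ t m := by
        show (if h : ∃ t, P t ∧ m ∈ R.ball S t θ then y₂ h.choose m else x m) = y₂ t m
        rw [dif_pos hex]
      have hxval : x m = y₁ t m := hc.1.2 hc.2
      refine ⟨t, hc.1, f1 t m ?_⟩
      intro heq
      exact hzm (by rw [hzval, ← heq, ← hxval])
    · exact absurd (g2 m (fun t hPt hmt => hex ⟨t, hPt, hmt⟩)) hzm
  -- local agreement dichotomy, for any radius κ with θ₀ + 2*κ ≤ θ
  have dich : ∀ (κ : ℕ), θ₀ + 2*κ ≤ θ → ∀ m : M,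
      (∃ t, P t ∧ R.ball S m κ ⊆ R.ball S t θ ∧ Set.EqOn z (y₂ t) (R.ball S m κ) ∧
        Set.EqOn x (y₁ t) (R.ball S m κ)) ∨ Set.EqOn z x (R.ball S m κ) := by
    intro κ hκ m
    by_cases hcase : ∃ t, P t ∧ (R.ball S m κ ∩ R.ball S t θ₀).Nonempty
    · obtain ⟨t, hPt, w, hw1, hw2⟩ := hcase
      left
      have hdtm : R.dist S t m ≤ θ₀ + κ := by
        have h1 := CellSpace.dist_triangle hS t w m
        rw [CellSpace.mem_ball] at hw1 hw2
        rw [CellSpace.dist_symm hS w m] at h1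
        omega
      have hsub : R.ball S m κ ⊆ R.ball S t θ := by
        refine (CellSpace.ball_subset_ball hS hdtm).trans (CellSpace.ball_mono ?_)
        omega
      exact ⟨t, hPt, hsub, fun a ha => g1 t hPt (hsub ha), fun a ha => hPt.2 (hsub ha)⟩
    · right
      intro w hw
      by_contra hzw
      obtain ⟨t, hPt, hwt⟩ := g3 w hzw
      exact hcase ⟨t, hPt, w, hw, hwt⟩
  have hθ₀θ : θ₀ ≤ θ := by omega
  -- z ∈ X
  have hzX : z ∈ X := by
    rw [hXeq]
    refine mem_generated_of_locally hS hdom (fun m => ?_)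
    rcases dich κX (by omega) m with ⟨t, hPt, hsub, hzeq, -⟩ | heq
    · exact ⟨y₂ t, hXeq ▸ (f2 t).2, hzeq⟩
    · exact ⟨x, hXeq ▸ hx, heq⟩
  -- avoidance
  have havoid : ∀ t ∈ T, ¬ Set.EqOn z (y₁ t) (R.ball S t θ) := by
    intro t ht hEq
    by_cases hPt : P t
    · obtain ⟨d, hd⟩ := hne
      have hdm : R.act (R.coord t) d ∈ R.ball S t θ := by
        have hda := CellSpace.dist_act hS (R.coord t) R.m0 d
        rw [R.coord_act] at hda
        rw [CellSpace.mem_ball, hda]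
        have := hD d hd
        rw [CellSpace.mem_ball] at this
        omega
      have h1 : z (R.act (R.coord t) d) = y₂ t (R.act (R.coord t) d) := g1 t hPt hdm
      have h2 : z (R.act (R.coord t) d) = y₁ t (R.act (R.coord t) d) := hEq hdm
      have h3 : y₁ t (R.act (R.coord t) d) = x₁ d := shiftAct_act R (R.coord t) x₁ d
      have h4 : y₂ t (R.act (R.coord t) d) = x₂ d := shiftAct_act R (R.coord t) x₂ d
      rw [h2, h3] at h1
      rw [h4] at h1
      exact hd h1
    · refine hPt ⟨ht, fun m hm => ?_⟩
      have hzx : z m = x m := by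
        by_contra hzm
        obtain ⟨t', hPt', hmt'⟩ := g3 m hzm
        have hmt'θ : m ∈ R.ball S t' θ := CellSpace.ball_mono hθ₀θ hmt'
        have hne' : t ≠ t' := fun h => hPt (h ▸ hPt')
        exact f3 t ht t' hPt'.1 hne' m hm hmt'θ
      rw [← hzx]
      exact hEq hm
  -- Δ z = Δ x
  have hΔz : Δ z = Δ x := by
    funext m
    rcases dich κΔ (by omega) m with ⟨t, hPt, hsub, hzeq, hxeq⟩ | heq
    · have e1 : Δ z m = Δ (y₂ t) m := localMap_eqOn hS hL hzX (f2 t).2 hzeq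
      have e2 : Δ (y₂ t) = Δ (y₁ t) := by
        rw [hy₁, hy₂]
        rw [localMap_equivariant hS hH hXgen hL hx₁ (hH t),
          localMap_equivariant hS hH hXgen hL hx₂ (hH t), hΔeq]
      have e3 : Δ (y₁ t) m = Δ x m :=
        localMap_eqOn hS hL (f2 t).1 hx (fun a ha => (hxeq ha).symm)
      rw [e1, e2, e3]
    · exact localMap_eqOn hS hL hzX hx heq
  exact ⟨z, hzX, havoid, hΔz⟩

lemma stepB_count [Finite Q] (hS : R.IsRightGenSet S) (hH : ∀ m : M, R.coord m ∈ H)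
    {X : Set (M → Q)} (hXgen : ∃ 𝔉, X = Generated R H 𝔉) {κs θ : ℕ}
    (hSI : IsStronglyIrr R S H X κs) {T : Set M}
    (hTsep : ∀ t ∈ T, ∀ t' ∈ T, t ≠ t' → 2*θ + κs + 1 ≤ R.dist S t t')
    {x₁ : M → Q} (hx₁X : x₁ ∈ X)
    {Z : Set (M → Q)} (hZX : Z ⊆ X)
    (hZavoid : ∀ z ∈ Z, ∀ t ∈ T,
      ¬ Set.EqOn z (shiftAct R (R.coord t) x₁) (R.ball S t θ))
    (hQ : 1 ≤ Nat.card Q) {F : Set M} (hF : F.Finite) :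
    ∃ Tf : Finset M, (∀ t, t ∈ Tf ↔ t ∈ T ∧ R.ball S t θ ⊆ F) ∧
      ((restr F Z).ncard : ℝ) *
        (1 / ((Nat.card Q : ℝ) ^ (R.ball S R.m0 (θ+κs)).ncard) + 1) ^ Tf.card
        ≤ ((restr F X).ncard : ℝ) := by
  classical
  haveI := hF.to_subtype
  set y₁ : M → (M → Q) := fun t => shiftAct R (R.coord t) x₁ with hy₁
  set V : ℕ := (R.ball S R.m0 (θ+κs)).ncard with hV
  set q : ℕ := Nat.card Q with hq
  have hTFfin : {t ∈ T | R.ball S t θ ⊆ F}.Finite :=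
    hF.subset (fun t ht => ht.2 (CellSpace.self_mem_ball t θ))
  set Tf : Finset M := hTFfin.toFinset with hTf
  have hTfmem : ∀ t, t ∈ Tf ↔ t ∈ T ∧ R.ball S t θ ⊆ F := by
    intro t
    rw [hTf, Set.Finite.mem_toFinset]
    exact Iff.rfl
  refine ⟨Tf, hTfmem, ?_⟩
  set U : Finset M → Set M := fun ε => ⋃ t ∈ (ε : Set M), R.ball S t (θ+κs) with hU
  set Match : (↥F → Q) → M → Prop := fun u t =>
    ∀ m, ∀ (hmF : m ∈ F), m ∈ R.ball S t θ → u ⟨m, hmF⟩ = y₁ t m with hMatch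
  have hkey : ∀ ε ∈ Tf.powerset, ∀ w ∈ restr F Z, ∃ u,
      u ∈ restr F X ∧ (∀ t ∈ Tf, (Match u t ↔ t ∈ ε)) ∧
      ∀ m (hmF : m ∈ F), m ∉ U ε → u ⟨m, hmF⟩ = w ⟨m, hmF⟩ := by
    intro ε hε w hw
    obtain ⟨z, hzZ, hzw⟩ := hw
    have hε' : ∀ t ∈ ε, t ∈ T ∧ R.ball S t θ ⊆ F := by
      intro t ht
      exact (hTfmem t).mp (Finset.mem_powerset.mp hε ht)
    have hsep1 : ∀ t ∈ ε, ∀ a ∈ R.ball S t θ, ∀ b ∈ F \ U ε,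
        κs + 1 ≤ R.dist S a b := by
      intro t ht a ha b hb
      have hbU : b ∉ R.ball S t (θ+κs) := by
        intro hbU
        exact hb.2 (Set.mem_biUnion (Finset.mem_coe.mpr ht) hbU)
      have h1 := CellSpace.dist_triangle hS t a b
      rw [CellSpace.mem_ball] at ha
      rw [CellSpace.mem_ball] at hbU
      push_neg at hbU
      omega
    have hsep2 : ∀ t ∈ ε, ∀ t' ∈ ε, t ≠ t' →
        ∀ a ∈ R.ball S t θ, ∀ b ∈ R.ball S t' θ, κs + 1 ≤ R.dist S a b := by
      intro t ht t' ht' hne a ha b hb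
      have h1 := hTsep t (hε' t ht).1 t' (hε' t' ht').1 hne
      have h2 := CellSpace.dist_triangle hS t a t'
      have h3 := CellSpace.dist_triangle hS a b t'
      rw [CellSpace.mem_ball] at ha hb
      rw [CellSpace.dist_symm hS b t'] at h3
      omega
    obtain ⟨x, hxX, hxO, hxball⟩ := glue hS hSI (F \ U ε) hF.diff (hZX hzZ) ε
      hsep1 hsep2 y₁ (fun t _ => shift_mem hXgen hx₁X (hH t))
    refine ⟨F.restrict x, restrict_mem_restr hxX F, ?_, ?_⟩
    · intro t htf
      constructor
      · intro hMt
        by_contra htε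
        have htT : t ∈ T := ((hTfmem t).mp htf).1
        have hballF : R.ball S t θ ⊆ F := ((hTfmem t).mp htf).2
        refine hZavoid z hzZ t htT (fun m hm => ?_)
        have hmF : m ∈ F := hballF hm
        have hmU : m ∉ U ε := by
          intro hmU
          simp only [hU, Set.mem_iUnion] at hmU
          obtain ⟨t', ht', hmt'⟩ := hmU
          have hne : t ≠ t' := fun h => htε (h ▸ ht')
          have h1 := hTsep t htT t' (hε' t' ht').1 hne
          have h2 := CellSpace.dist_triangle hS t m t'
          rw [CellSpace.mem_ball] at hm hmt'
          rw [CellSpace.dist_symm hS m t'] at h2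
          omega
        have h3 : F.restrict x ⟨m, hmF⟩ = y₁ t m := hMt m hmF hm
        have h4 : x m = z m := hxO ⟨hmF, hmU⟩
        calc z m = x m := h4.symm
          _ = F.restrict x ⟨m, hmF⟩ := rfl
          _ = y₁ t m := h3
      · intro htε m hmF hm
        exact hxball t htε hm
    · intro m hmF hmU
      calc F.restrict x ⟨m, hmF⟩ = x m := rfl
        _ = z m := hxO ⟨hmF, hmU⟩
        _ = w ⟨m, hmF⟩ := by rw [← hzw]; rfl
  set Φ : Finset M → (↥F → Q) → (↥F → Q) := fun ε w =>
    if h : ε ∈ Tf.powerset ∧ w ∈ restr F Z then (hkey ε h.1 w h.2).choose else w with hΦ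
  have hΦspec : ∀ ε (hε : ε ∈ Tf.powerset) w (hw : w ∈ restr F Z),
      (Φ ε w) ∈ restr F X ∧ (∀ t ∈ Tf, (Match (Φ ε w) t ↔ t ∈ ε)) ∧
      ∀ m (hmF : m ∈ F), m ∉ U ε → (Φ ε w) ⟨m, hmF⟩ = w ⟨m, hmF⟩ := by
    intro ε hε w hw
    have heq : Φ ε w = (hkey ε hε w hw).choose := by
      rw [hΦ]
      exact dif_pos ⟨hε, hw⟩
    rw [heq]
    exact (hkey ε hε w hw).choose_spec
  set Simg : Finset M → Set (↥F → Q) := fun ε => Φ ε '' (restr F Z) with hSimg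
  have hsub : ∀ ε ∈ Tf.powerset, Simg ε ⊆ restr F X := by
    rintro ε hε u ⟨w, hw, rfl⟩
    exact (hΦspec ε hε w hw).1
  have hdisj : ∀ ε ∈ Tf.powerset, ∀ ε' ∈ Tf.powerset, ε ≠ ε' →
      Disjoint (Simg ε) (Simg ε') := by
    intro ε hε ε' hε' hne
    rw [Set.disjoint_left]
    rintro u ⟨w, hw, rfl⟩ ⟨w', hw', hu⟩
    apply hne
    apply Finset.ext
    intro t
    by_cases htf : t ∈ Tf
    · have h1 := (hΦspec ε hε w hw).2.1 t htf
      have h2 := (hΦspec ε' hε' w' hw').2.1 t htf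
      rw [hu] at h2
      exact Iff.trans h1.symm h2
    · constructor
      · intro h
        exact absurd (Finset.mem_powerset.mp hε h) htf
      · intro h
        exact absurd (Finset.mem_powerset.mp hε' h) htf
  have hfiber : ∀ ε ∈ Tf.powerset,
      (restr F Z).ncard ≤ (Simg ε).ncard * q ^ (U ε ∩ F).ncard := by
    intro ε hε
    haveI := (hF.subset (Set.inter_subset_right (s := U ε) (t := F))).to_subtype
    set g : (↥F → Q) → (↥F → Q) × (↥(U ε ∩ F) → Q) :=
      fun w => (Φ ε w, fun d => w ⟨d.1, d.2.2⟩) with hg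
    have hmapsto : ∀ w ∈ restr F Z, g w ∈ (Simg ε) ×ˢ (Set.univ : Set (↥(U ε ∩ F) → Q)) :=
      fun w hw => ⟨⟨w, hw, rfl⟩, trivial⟩
    have hinj : Set.InjOn g (restr F Z) := by
      intro w hw w' hw' hgw
      have h1 : Φ ε w = Φ ε w' := congrArg Prod.fst hgw
      have h2 := congrArg Prod.snd hgw
      funext a
      by_cases haU : (a : M) ∈ U ε
      · exact congrFun h2 ⟨a.1, haU, a.2⟩
      · have e1 := (hΦspec ε hε w hw).2.2 a.1 a.2 haU
        have e2 := (hΦspec ε hε w' hw').2.2 a.1 a.2 haU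
        calc w a = Φ ε w ⟨a.1, a.2⟩ := e1.symm
          _ = Φ ε w' ⟨a.1, a.2⟩ := by rw [h1]
          _ = w' a := e2
    have hle := Set.ncard_le_ncard_of_injOn g hmapsto hinj (Set.toFinite _)
    rwa [ncard_prod, Set.ncard_univ, Nat.card_fun, Nat.card_coe_set_eq] at hle
  have hUbound : ∀ ε ∈ Tf.powerset, (U ε ∩ F).ncard ≤ ε.card * V := by
    intro ε _
    have hUfin : (U ε).Finite :=
      Set.Finite.biUnion ε.finite_toSet (fun _ _ => CellSpace.ball_finite hS _ _)
    calc (U ε ∩ F).ncard ≤ (U ε).ncard :=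
        Set.ncard_le_ncard (Set.inter_subset_left) hUfin
      _ ≤ ∑ t ∈ ε, (R.ball S t (θ+κs)).ncard := ncard_biUnion_le ε _
      _ = ∑ _t ∈ ε, V := Finset.sum_congr rfl (fun t _ => CellSpace.ncard_ball hS t _)
      _ = ε.card * V := by rw [Finset.sum_const, smul_eq_mul]
  have hq1 : (1:ℝ) ≤ (q:ℝ) := by exact_mod_cast hQ
  set Cr : ℝ := (q:ℝ) ^ V with hCr
  have hfiberR : ∀ ε ∈ Tf.powerset,
      ((restr F Z).ncard : ℝ) * (1/Cr)^ε.card ≤ ((Simg ε).ncard : ℝ) := by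
    intro ε hε
    have h2 : (q:ℝ) ^ (U ε ∩ F).ncard ≤ Cr ^ ε.card := by
      rw [hCr, ← pow_mul]
      exact pow_le_pow_right₀ hq1 (by rw [mul_comm]; exact hUbound ε hε)
    have h3 : ((restr F Z).ncard : ℝ) ≤ ((Simg ε).ncard : ℝ) * Cr ^ ε.card := by
      calc ((restr F Z).ncard : ℝ)
          ≤ ((Simg ε).ncard : ℝ) * (q:ℝ) ^ (U ε ∩ F).ncard := by
            exact_mod_cast hfiber ε hε
        _ ≤ ((Simg ε).ncard : ℝ) * Cr ^ ε.card :=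
            mul_le_mul_of_nonneg_left h2 (by positivity)
    have hCrpos : (0:ℝ) < Cr ^ ε.card := by positivity
    rw [one_div, inv_pow, ← div_eq_mul_inv, div_le_iff₀ hCrpos]
    exact h3
  have hsum1 : ∑ ε ∈ Tf.powerset, (Simg ε).ncard ≤ (restr F X).ncard :=
    sum_ncard_le_ncard Tf.powerset Simg (restr F X) (Set.toFinite _) hdisj hsub
  calc ((restr F Z).ncard : ℝ) * (1/Cr + 1) ^ Tf.card
      = ∑ ε ∈ Tf.powerset, ((restr F Z).ncard : ℝ) * (1/Cr)^ε.card := by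
        rw [← Finset.mul_sum, sum_powerset_pow]
    _ ≤ ∑ ε ∈ Tf.powerset, ((Simg ε).ncard : ℝ) :=
        Finset.sum_le_sum (fun ε hε => hfiberR ε hε)
    _ = ((∑ ε ∈ Tf.powerset, (Simg ε).ncard : ℕ) : ℝ) := by push_cast; rfl
    _ ≤ ((restr F X).ncard : ℝ) := by exact_mod_cast hsum1

lemma subset_clos (R : CellSpace G M) (S : Set G) (F : Set M) (ρ : ℕ) :
    F ⊆ R.clos S F ρ := by
  intro m hm
  exact ⟨m, CellSpace.self_mem_ball m ρ, hm⟩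

lemma clos_finite (hS : R.IsRightGenSet S) {F : Set M} (hF : F.Finite) (ρ : ℕ) :
    (R.clos S F ρ).Finite := by
  refine Set.Finite.subset (Set.Finite.biUnion hF (fun m _ => CellSpace.ball_finite hS m ρ)) ?_
  rintro m' ⟨m, hm1, hm2⟩
  refine Set.mem_biUnion hm2 ?_
  rw [CellSpace.mem_ball]
  rw [CellSpace.mem_ball, CellSpace.dist_symm hS] at hm1
  exact hm1

lemma image_restr_le [Finite Q] (hS : R.IsRightGenSet S)
    {X Y : Set (M → Q)} {Δ : (M → Q) → (M → Q)} {κΔ : ℕ}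
    (hL : IsLocalMap R S H X Y Δ κΔ) {Z : Set (M → Q)} (hZX : Z ⊆ X)
    (hstepA : ∀ x ∈ X, ∃ z ∈ Z, Δ z = Δ x) {F : Set M} (hF : F.Finite) :
    (restr F (Δ '' X)).ncard ≤ (restr (R.clos S F κΔ) Z).ncard := by
  classical
  obtain ⟨-, N, hNball, -, δ, -, hδ⟩ := hL
  have hclosfin := clos_finite hS hF κΔ
  haveI := hclosfin.to_subtype
  have hmemclos : ∀ (m : M), m ∈ F → ∀ n : ↥N, R.nAct m ↑n ∈ R.clos S F κΔ := by
    intro m hm n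
    have h1 : R.nAct m ↑n ∈ R.ball S m κΔ := nAct_mem_ball hS (hNball n.2) m
    refine ⟨m, ?_, hm⟩
    rw [CellSpace.mem_ball] at h1 ⊢
    rw [CellSpace.dist_symm hS]
    exact h1
  set ρmap : (↥(R.clos S F κΔ) → Q) → (↥F → Q) := fun w mF =>
    δ (fun n => w ⟨R.nAct mF.1 ↑n, hmemclos mF.1 mF.2 n⟩) with hρ
  have hsub : restr F (Δ '' X) ⊆ ρmap '' (restr (R.clos S F κΔ) Z) := by
    rintro v ⟨-, ⟨x, hx, rfl⟩, rfl⟩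
    obtain ⟨z, hzZ, hΔz⟩ := hstepA x hx
    refine ⟨(R.clos S F κΔ).restrict z, restrict_mem_restr hzZ _, ?_⟩
    funext mF
    show δ (fun n => z (R.nAct mF.1 ↑n)) = Δ x mF.1
    rw [← hΔz, hδ z (hZX hzZ) mF.1]
  calc (restr F (Δ '' X)).ncard
      ≤ (ρmap '' (restr (R.clos S F κΔ) Z)).ncard :=
        Set.ncard_le_ncard hsub (Set.Finite.image _ (Set.toFinite _))
    _ ≤ (restr (R.clos S F κΔ) Z).ncard := Set.ncard_image_le (Set.toFinite _)

lemma arith_main {A Zl Xl n k b1 b2 VR lq c₀ : ℝ}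
    (hnp : 0 < n) (hV : 0 < VR) (hlq : 0 < lq) (hc₀ : 0 < c₀)
    (e0 : A ≤ Zl + b2 * lq) (e1 : Zl + k * c₀ ≤ Xl)
    (e2 : n ≤ k * VR + b1) (e3 : b1 * 4 < n)
    (e4 : b2 * (4 * VR * lq) < n * c₀) :
    A / n ≤ Xl / n - c₀ / (2 * VR) := by
  have hc₀n : (0:ℝ) ≤ c₀ := hc₀.le
  have f0 : n - b1 ≤ k * VR := by linarith
  have f1 : (n - b1) * c₀ ≤ k * VR * c₀ := mul_le_mul_of_nonneg_right f0 hc₀n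
  have h5 : b1 * 4 * c₀ ≤ n * c₀ := mul_le_mul_of_nonneg_right e3.le hc₀n
  have key0 : n * c₀ / 2 + b2 * lq * VR ≤ k * c₀ * VR := by nlinarith [f1, h5, e4]
  have hVne : VR ≠ 0 := ne_of_gt hV
  have hid : c₀ / (2 * VR) * n * VR = n * c₀ / 2 := by
    field_simp
  have key : c₀ / (2 * VR) * n + b2 * lq ≤ k * c₀ := by
    have key1 : (c₀ / (2 * VR) * n + b2 * lq) * VR ≤ k * c₀ * VR := by
      have hexp : (c₀ / (2 * VR) * n + b2 * lq) * VR
          = c₀ / (2 * VR) * n * VR + b2 * lq * VR := by ring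
      rw [hexp, hid]
      linarith [key0]
    exact le_of_mul_le_mul_right key1 hV
  have final : A ≤ Xl - c₀ / (2 * VR) * n := by linarith
  calc A / n ≤ (Xl - c₀ / (2 * VR) * n) / n := (div_le_div_iff_of_pos_right hnp).mpr final
    _ = Xl / n - c₀ / (2 * VR) := by
        rw [sub_div, mul_div_cancel_right₀ _ (ne_of_gt hnp)]
end Lemmas

theorem stmt17 {I : Type*} [Nonempty I] [SemilatticeSup I]
    [Finite Q] (R : CellSpace G M) (S : Set G) (hS : R.IsRightGenSet S)
    (H : Subgroup G) (hH : ∀ m : M, R.coord m ∈ H)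
    (hM : Infinite M)
    (hAm : RightAmenable R) (F : I → Set M) (hF : IsFolnerNet R S F)
    (X : Set (M → Q)) (hX : IsSubshiftFT R H X)
    (hXsi : ∃ κ : ℕ, IsStronglyIrr R S H X κ)
    (Y : Set (M → Q)) (hY : IsSubshift R H Y)
    (Δ : (M → Q) → (M → Q)) (hΔ : ∃ κ : ℕ, IsLocalMap R S H X Y Δ κ)
    (hpi : ¬ PreInjective X Δ) :
    entropy R S F (Δ '' X) < entropy R S F X := by
  classical
  obtain ⟨κΔ, hL⟩ := hΔ
  obtain ⟨κs, hSI⟩ := hXsi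
  obtain ⟨𝔉, h𝔉fin, h𝔉dom, hXeq⟩ := hX
  obtain ⟨κX, hdom⟩ := exists_sft_radius hS h𝔉fin h𝔉dom
  have hXgen : ∃ 𝔉', X = Generated R H 𝔉' := ⟨𝔉, hXeq⟩
  rw [PreInjective] at hpi
  push_neg at hpi
  obtain ⟨u₁, hu₁, u₂, hu₂, hΔu, hDfin, hune⟩ := hpi
  have hd₀ : ∃ m, u₁ m ≠ u₂ m := by
    by_contra hcon
    push_neg at hcon
    exact hune (funext hcon)
  obtain ⟨d₀, hd₀⟩ := hd₀
  set g : G := (R.coord d₀)⁻¹ with hgdef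
  have hgH : g ∈ H := inv_mem (hH d₀)
  set x₁ : M → Q := shiftAct R g u₁ with hx₁def
  set x₂ : M → Q := shiftAct R g u₂ with hx₂def
  have hx₁ : x₁ ∈ X := shift_mem hXgen hu₁ hgH
  have hx₂ : x₂ ∈ X := shift_mem hXgen hu₂ hgH
  have hΔ12 : Δ x₁ = Δ x₂ := by
    rw [hx₁def, hx₂def, localMap_equivariant hS hH hXgen hL hu₁ hgH,
      localMap_equivariant hS hH hXgen hL hu₂ hgH, hΔu]
  have hDfin' : {m | x₁ m ≠ x₂ m}.Finite := by
    refine Set.Finite.subset (hDfin.image (R.act g)) ?_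
    intro m hm
    exact ⟨R.act g⁻¹ m, hm, R.act_act_inv g m⟩
  obtain ⟨θ₀, hθ₀⟩ := finite_subset_ball hS _ hDfin'
  have hne12 : ∃ m, x₁ m ≠ x₂ m := by
    refine ⟨R.act g⁻¹⁻¹ d₀, ?_⟩
    show u₁ (R.act g⁻¹ (R.act g⁻¹⁻¹ d₀)) ≠ u₂ (R.act g⁻¹ (R.act g⁻¹⁻¹ d₀))
    rw [R.act_act_inv]
    exact hd₀
  set θ : ℕ := θ₀ + 2*κX + 2*κΔ with hθdef
  set θ' : ℕ := 2*θ + κs with hθ'def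
  obtain ⟨T, hTsep, hTcov⟩ := exists_tiling (R := R) hS θ'
  have hTsepB : ∀ t ∈ T, ∀ t' ∈ T, t ≠ t' → 2*θ + κs + 1 ≤ R.dist S t t' := by
    intro t ht t' ht' hne
    have h := hTsep t ht t' ht' hne
    omega
  have hTsepA : ∀ t ∈ T, ∀ t' ∈ T, t ≠ t' → 2*θ + 1 ≤ R.dist S t t' := by
    intro t ht t' ht' hne
    have h := hTsep t ht t' ht' hne
    omega
  set Z : Set (M → Q) := {z | z ∈ X ∧ ∀ t ∈ T,
    ¬ Set.EqOn z (shiftAct R (R.coord t) x₁) (R.ball S t θ)} with hZdef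
  have hZX : Z ⊆ X := fun z hz => hz.1
  have hstepAZ : ∀ x ∈ X, ∃ z ∈ Z, Δ z = Δ x := by
    intro x hx
    obtain ⟨z, hzX, hav, hΔz⟩ := stepA hS hH hL hXeq hdom hx₁ hx₂ hΔ12 hne12
      (fun m hm => hθ₀ hm) hθdef hTsepA x hx
    exact ⟨z, ⟨hzX, hav⟩, hΔz⟩
  have hZavoid : ∀ z ∈ Z, ∀ t ∈ T,
      ¬ Set.EqOn z (shiftAct R (R.coord t) x₁) (R.ball S t θ) := fun z hz => hz.2
  have hQne : Nonempty Q := ⟨x₁ R.m0⟩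
  have hQ : 1 ≤ Nat.card Q :=
    Nat.one_le_iff_ne_zero.mpr (Nat.card_ne_zero.mpr ⟨hQne, inferInstance⟩)
  obtain ⟨hFne, hFfin, hFlim⟩ := hF
  choose Tf hTfmem hTfineq using fun i : I =>
    stepB_count hS hH hXgen hSI hTsepB hx₁ hZX hZavoid hQ (hFfin i)
  set q : ℕ := Nat.card Q with hqdef
  set V : ℕ := (R.ball S R.m0 (θ+κs)).ncard with hVdef
  set V' : ℕ := (R.ball S R.m0 θ').ncard with hV'def
  have hV'pos : 0 < V' := by
    rw [hV'def, Set.ncard_pos (CellSpace.ball_finite hS _ _)]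
    exact ⟨R.m0, CellSpace.self_mem_ball _ _⟩
  set Cr : ℝ := (q:ℝ) ^ V with hCrdef
  have hq1 : (1:ℝ) ≤ (q:ℝ) := by exact_mod_cast hQ
  have hCr1 : (1:ℝ) ≤ Cr := one_le_pow₀ hq1
  have hCrpos : (0:ℝ) < Cr := lt_of_lt_of_le one_pos hCr1
  set c₀ : ℝ := Real.log (1/Cr + 1) with hc₀def
  have hc₀pos : 0 < c₀ := by
    rw [hc₀def]
    apply Real.log_pos
    rw [lt_add_iff_pos_left]
    positivity
  set lq : ℝ := Real.log q + 1 with hlqdef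
  have hlq1 : 1 ≤ lq := le_add_of_nonneg_left (Real.log_nonneg hq1)
  have hlqpos : 0 < lq := lt_of_lt_of_le one_pos hlq1
  set V'R : ℝ := (V' : ℝ) with hV'Rdef
  have hV'Rpos : 0 < V'R := by
    rw [hV'Rdef]
    exact_mod_cast hV'pos
  set c : ℝ := c₀ / (2 * V'R) with hcdef
  have hcpos : 0 < c := by positivity
  obtain ⟨z₀, hz₀Z, -⟩ := hstepAZ x₁ hx₁
  have hn1 : ∀ i, 0 < (F i).ncard := fun i => (Set.ncard_pos (hFfin i)).mpr (hFne i)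
  have hnpos : ∀ i, (0:ℝ) < ((F i).ncard : ℝ) := fun i => by exact_mod_cast hn1 i
  have hZne : ∀ i, 1 ≤ (restr (F i) Z).ncard := by
    intro i
    haveI := (hFfin i).to_subtype
    exact (Set.ncard_pos (Set.toFinite _)).mpr ⟨_, restrict_mem_restr hz₀Z (F i)⟩
  have hXne : ∀ i, 1 ≤ (restr (F i) X).ncard := by
    intro i
    haveI := (hFfin i).to_subtype
    exact (Set.ncard_pos (Set.toFinite _)).mpr ⟨_, restrict_mem_restr hx₁ (F i)⟩
  have hAne : ∀ i, 1 ≤ (restr (F i) (Δ '' X)).ncard := by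
    intro i
    haveI := (hFfin i).to_subtype
    exact (Set.ncard_pos (Set.toFinite _)).mpr
      ⟨_, restrict_mem_restr (Set.mem_image_of_mem Δ hx₁) (F i)⟩
  have hXub : ∀ i, (restr (F i) X).ncard ≤ q ^ (F i).ncard := by
    intro i
    haveI := (hFfin i).to_subtype
    calc (restr (F i) X).ncard
        ≤ (Set.univ : Set (↥(F i) → Q)).ncard :=
          Set.ncard_le_ncard (Set.subset_univ _) (Set.toFinite _)
      _ = q ^ (F i).ncard := by
          rw [Set.ncard_univ, Nat.card_fun, Nat.card_coe_set_eq]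
  -- inequality (i)
  have hineq1 : ∀ i, Real.log ((restr (F i) (Δ '' X)).ncard : ℝ) ≤
      Real.log ((restr (F i) Z).ncard : ℝ) +
        ((R.bdry S (F i) κΔ).ncard : ℝ) * lq := by
    intro i
    have h1 : (restr (F i) (Δ '' X)).ncard ≤ (restr (R.clos S (F i) κΔ) Z).ncard :=
      image_restr_le hS hL hZX hstepAZ (hFfin i)
    have hFsub : F i ⊆ R.clos S (F i) κΔ := subset_clos R S (F i) κΔ
    have h2 : (restr (R.clos S (F i) κΔ) Z).ncard ≤
        (restr (F i) Z).ncard * q ^ ((R.clos S (F i) κΔ \ F i).ncard) :=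
      restr_ncard_le_mul hFsub (clos_finite hS (hFfin i) κΔ)
    have hbd : (R.clos S (F i) κΔ \ F i).ncard ≤ (R.bdry S (F i) κΔ).ncard := by
      refine Set.ncard_le_ncard ?_
        ((clos_finite hS (hFfin i) κΔ).subset Set.diff_subset)
      intro m hm
      exact ⟨hm.1, fun hint => hm.2 hint.1⟩
    have h3 : (restr (F i) (Δ '' X)).ncard ≤
        (restr (F i) Z).ncard * q ^ (R.bdry S (F i) κΔ).ncard := by
      refine le_trans h1 (le_trans h2 ?_)
      exact Nat.mul_le_mul_left _ (Nat.pow_le_pow_right hQ hbd)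
    have hApos : (0:ℝ) < ((restr (F i) (Δ '' X)).ncard : ℝ) := by
      exact_mod_cast hAne i
    have hZpos : (0:ℝ) < ((restr (F i) Z).ncard : ℝ) := by exact_mod_cast hZne i
    have hqpow : (0:ℝ) < (q:ℝ) ^ (R.bdry S (F i) κΔ).ncard := by positivity
    calc Real.log ((restr (F i) (Δ '' X)).ncard : ℝ)
        ≤ Real.log (((restr (F i) Z).ncard : ℝ) *
            (q:ℝ) ^ (R.bdry S (F i) κΔ).ncard) := by
          apply Real.log_le_log hApos
          exact_mod_cast h3
      _ = Real.log ((restr (F i) Z).ncard : ℝ) +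
          ((R.bdry S (F i) κΔ).ncard : ℝ) * Real.log q := by
          rw [Real.log_mul (ne_of_gt hZpos) (ne_of_gt hqpow), Real.log_pow]
      _ ≤ Real.log ((restr (F i) Z).ncard : ℝ) +
          ((R.bdry S (F i) κΔ).ncard : ℝ) * lq := by
          have hlog : Real.log q ≤ lq := by
            rw [hlqdef]
            linarith
          have hnn : (0:ℝ) ≤ ((R.bdry S (F i) κΔ).ncard : ℝ) := by positivity
          nlinarith
  -- inequality (ii)
  have hineq2 : ∀ i, Real.log ((restr (F i) Z).ncard : ℝ) +
      ((Tf i).card : ℝ) * c₀ ≤ Real.log ((restr (F i) X).ncard : ℝ) := by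
    intro i
    have h := hTfineq i
    have hZpos : (0:ℝ) < ((restr (F i) Z).ncard : ℝ) := by exact_mod_cast hZne i
    have hppos : (0:ℝ) < (1/Cr + 1) ^ (Tf i).card := by positivity
    have hlog := Real.log_le_log (by positivity) h
    rwa [Real.log_mul (ne_of_gt hZpos) (ne_of_gt hppos), Real.log_pow] at hlog
  -- inequality (iii)
  have hineq3 : ∀ i, (F i).ncard ≤ (Tf i).card * V' +
      (R.bdry S (F i) (θ+θ')).ncard := by
    intro i
    have hcov : R.inter S (F i) (θ+θ') ⊆
        ⋃ t ∈ ((Tf i : Finset M) : Set M), R.ball S t θ' := by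
      intro m hm
      obtain ⟨t, htT, htd⟩ := hTcov m
      have hball : R.ball S t θ ⊆ F i := by
        intro a ha
        apply hm.2
        rw [CellSpace.mem_ball] at ha ⊢
        have h2 := CellSpace.dist_triangle hS m t a
        omega
      refine Set.mem_biUnion (Finset.mem_coe.mpr ((hTfmem i t).mpr ⟨htT, hball⟩)) ?_
      rw [CellSpace.mem_ball, CellSpace.dist_symm hS]
      exact htd
    have h1 : (R.inter S (F i) (θ+θ')).ncard ≤ (Tf i).card * V' := by
      calc (R.inter S (F i) (θ+θ')).ncard
          ≤ (⋃ t ∈ ((Tf i : Finset M) : Set M), R.ball S t θ').ncard :=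
            Set.ncard_le_ncard hcov (Set.Finite.biUnion (Tf i).finite_toSet
              (fun t _ => CellSpace.ball_finite hS t θ'))
        _ ≤ ∑ t ∈ Tf i, (R.ball S t θ').ncard := ncard_biUnion_le _ _
        _ = ∑ _t ∈ Tf i, V' :=
            Finset.sum_congr rfl (fun t _ => CellSpace.ncard_ball hS t θ')
        _ = (Tf i).card * V' := by rw [Finset.sum_const, smul_eq_mul]
    have h2 : F i ⊆ R.inter S (F i) (θ+θ') ∪ R.bdry S (F i) (θ+θ') := by
      intro m hm
      by_cases hint : m ∈ R.inter S (F i) (θ+θ')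
      · exact Or.inl hint
      · exact Or.inr ⟨⟨m, CellSpace.self_mem_ball m _, hm⟩, hint⟩
    have hbdfin : (R.bdry S (F i) (θ+θ')).Finite :=
      (clos_finite hS (hFfin i) _).subset Set.diff_subset
    calc (F i).ncard
        ≤ (R.inter S (F i) (θ+θ') ∪ R.bdry S (F i) (θ+θ')).ncard :=
          Set.ncard_le_ncard h2
            (((hFfin i).subset (fun m hm => hm.1)).union hbdfin)
      _ ≤ (R.inter S (F i) (θ+θ')).ncard + (R.bdry S (F i) (θ+θ')).ncard :=
          Set.ncard_union_le _ _
      _ ≤ (Tf i).card * V' + (R.bdry S (F i) (θ+θ')).ncard := by omega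
  -- eventual bound
  have hev1 : ∀ᶠ i in atTop,
      ((R.bdry S (F i) (θ+θ')).ncard : ℝ) / ((F i).ncard : ℝ) < 1/4 :=
    Filter.Tendsto.eventually_lt_const (by norm_num) (hFlim (θ+θ'))
  have hev2 : ∀ᶠ i in atTop,
      ((R.bdry S (F i) κΔ).ncard : ℝ) / ((F i).ncard : ℝ) < c₀ / (4 * V'R * lq) :=
    Filter.Tendsto.eventually_lt_const (by positivity) (hFlim κΔ)
  have hmain : ∀ᶠ i in atTop,
      Real.log ((restr (F i) (Δ '' X)).ncard : ℝ) / ((F i).ncard : ℝ) ≤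
        Real.log ((restr (F i) X).ncard : ℝ) / ((F i).ncard : ℝ) - c := by
    filter_upwards [hev1, hev2] with i h1 h2
    have hnp : (0:ℝ) < ((F i).ncard : ℝ) := hnpos i
    have e0 := hineq1 i
    have e1 := hineq2 i
    have e2 : ((F i).ncard : ℝ) ≤ ((Tf i).card : ℝ) * V'R +
        ((R.bdry S (F i) (θ+θ')).ncard : ℝ) := by
      have h := hineq3 i
      rw [hV'Rdef]
      exact_mod_cast h
    have e3 : ((R.bdry S (F i) (θ+θ')).ncard : ℝ) * 4 < ((F i).ncard : ℝ) := by
      have h' := (div_lt_iff₀ hnp).mp h1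
      linarith
    have e4 : ((R.bdry S (F i) κΔ).ncard : ℝ) * (4 * V'R * lq) <
        ((F i).ncard : ℝ) * c₀ := by
      have h2' := (div_lt_iff₀ hnp).mp h2
      have hpos : (0:ℝ) < 4 * V'R * lq := by positivity
      calc ((R.bdry S (F i) κΔ).ncard : ℝ) * (4 * V'R * lq)
          < (c₀ / (4 * V'R * lq) * ((F i).ncard : ℝ)) * (4 * V'R * lq) :=
            mul_lt_mul_of_pos_right h2' hpos
        _ = ((F i).ncard : ℝ) * c₀ := by
            field_simp
    rw [hcdef]
    exact arith_main hnp hV'Rpos hlqpos hc₀pos e0 e1 e2 e3 e4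
  -- limsup assembly
  have hxub' : ∀ i, Real.log ((restr (F i) X).ncard : ℝ) / ((F i).ncard : ℝ) ≤
      Real.log q := by
    intro i
    rw [div_le_iff₀ (hnpos i)]
    have hXpos : (0:ℝ) < ((restr (F i) X).ncard : ℝ) := by exact_mod_cast hXne i
    have h1 : ((restr (F i) X).ncard : ℝ) ≤ ((q:ℝ)) ^ ((F i).ncard) := by
      exact_mod_cast hXub i
    calc Real.log ((restr (F i) X).ncard : ℝ)
        ≤ Real.log ((q:ℝ) ^ (F i).ncard) := Real.log_le_log hXpos h1
      _ = ((F i).ncard : ℝ) * Real.log q := by rw [Real.log_pow]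
      _ = Real.log q * ((F i).ncard : ℝ) := by ring
  have halb : ∀ i, (0:ℝ) ≤
      Real.log ((restr (F i) (Δ '' X)).ncard : ℝ) / ((F i).ncard : ℝ) := by
    intro i
    apply div_nonneg _ (le_of_lt (hnpos i))
    apply Real.log_nonneg
    exact_mod_cast hAne i
  have hbddx : Filter.IsBoundedUnder (· ≤ ·) (atTop : Filter I)
      (fun i => Real.log ((restr (F i) X).ncard : ℝ) / ((F i).ncard : ℝ)) :=
    Filter.isBoundedUnder_of ⟨Real.log q, fun i => hxub' i⟩
  have hcob : Filter.IsCoboundedUnder (· ≤ ·) (atTop : Filter I)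
      (fun i => Real.log ((restr (F i) (Δ '' X)).ncard : ℝ) / ((F i).ncard : ℝ)) :=
    Filter.IsBoundedUnder.isCoboundedUnder_le
      (Filter.isBoundedUnder_of ⟨0, fun i => halb i⟩)
  have hLlt : entropy R S F X < entropy R S F X + c/2 :=
    lt_add_of_pos_right _ (by positivity)
  have hevx : ∀ᶠ i in (atTop : Filter I),
      Real.log ((restr (F i) X).ncard : ℝ) / ((F i).ncard : ℝ) <
        entropy R S F X + c/2 :=
    Filter.eventually_lt_of_limsup_lt hLlt hbddx
  have heva : ∀ᶠ i in (atTop : Filter I),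
      Real.log ((restr (F i) (Δ '' X)).ncard : ℝ) / ((F i).ncard : ℝ) ≤
        entropy R S F X - c/2 := by
    filter_upwards [hmain, hevx] with i hm hx2
    linarith
  have hent1 : entropy R S F (Δ '' X) = limsup
      (fun i => Real.log ((restr (F i) (Δ '' X)).ncard : ℝ) / ((F i).ncard : ℝ))
      (atTop : Filter I) := rfl
  have hfinal : entropy R S F (Δ '' X) ≤ entropy R S F X - c/2 := by
    rw [hent1]
    exact Filter.limsup_le_of_le hcob heva
  linarith
end GoE
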